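/- Let P : M → A be a relative averaging operator. Then M carries a diassociative algebra structure with operations u ⊣_P v = u·P(v) and u ⊢_P v = P(u)·v; i.e. these operations satisfy the five diassociative identities. -/
import Mathlib


/-- An `A`-bimodule structure on `M` over an associative algebra `A`:
left and right actions that are biadditive and associative/compatible. -/
structure ABimodule (A : Type*) (M : Type*) [Ring A] [AddCommGroup M] where
  lsmul : A → M → M
  rsmul : M → A → M
  lsmul_add : ∀ a u v, lsmul a (u + v) = lsmul a u + lsmul a v
  add_lsmul : ∀ a b u, lsmul (a + b) u = lsmul a u + lsmul b u
  rsmul_add : ∀ u v a, rsmul (u + v) a = rsmul u a + rsmul v a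
  add_rsmul : ∀ u a b, rsmul u (a + b) = rsmul u a + rsmul u b
  mul_lsmul : ∀ a b u, lsmul (a * b) u = lsmul a (lsmul b u)
  rsmul_mul : ∀ u a b, rsmul u (a * b) = rsmul (rsmul u a) b
  lsmul_rsmul : ∀ a u b, rsmul (lsmul a u) b = lsmul a (rsmul u b)

/-- `P : M → A` is a relative averaging operator:
`P(u)·P(v) = P(P(u)·v) = P(u·P(v))`. -/
def IsRelAvgOp {A M : Type*} [Ring A] [AddCommGroup M]
    (ρ : ABimodule A M) (P : M → A) : Prop :=
  ∀ u v : M, P u * P v = P (ρ.lsmul (P u) v) ∧ P u * P v = P (ρ.rsmul u (P v))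

/-- The five diassociative algebra identities for a pair of binary operations. -/
def IsDiassoc {D : Type*} (dl dr : D → D → D) : Prop :=
  ∀ x y z : D,
    dl (dl x y) z = dl x (dl y z) ∧
    dl x (dl y z) = dl x (dr y z) ∧
    dl (dr x y) z = dr x (dl y z) ∧
    dr (dl x y) z = dr (dr x y) z ∧
    dr (dr x y) z = dr x (dr y z)

/-- If `P : M → A` is a relative averaging operator, then
`u ⊣_P v = u·P(v)` and `u ⊢_P v = P(u)·v` make `M` a diassociative algebra. -/
theorem inducedDiassoc_of_relAvgOp
    (A M : Type*) [Ring A] [AddCommGroup M] (ρ : ABimodule A M) (P : M → A)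
    (hP : IsRelAvgOp ρ P) :
    IsDiassoc (D := M) (fun u v => ρ.rsmul u (P v)) (fun u v => ρ.lsmul (P u) v) := by
  intro x y z
  refine ⟨?_, ?_, ?_, ?_, ?_⟩
  · simp only [← ρ.rsmul_mul, ← (hP y z).2]
  · simp only [← (hP y z).1, ← (hP y z).2]
  · exact ρ.lsmul_rsmul _ _ _
  · simp only [← (hP x y).1, ← (hP x y).2]
  · simp only [← (hP x y).1, ρ.mul_lsmul]
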